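/- Let Φ be an m×n complex matrix (n ≥ 2) whose columns φ_1, …, φ_n all lie in a d-dimensional subspace H of ℂ^m with 1 ≤ d ≤ n, and satisfy ‖φ_i‖² = r > 0 for all i. Then max_{i≠j} |⟨φ_i, φ_j⟩|/r = √((n − d)/(d(n − 1))) (equality in the Welch bound) if and only if the columns form an equiangular tight frame for H, i.e., ΦΦ* = (rn/d)·Π where Π is the orthogonal projection onto H, and there is w ≥ 0 with |⟨φ_i, φ_j⟩| = w for all i ≠ j. -/

import Mathlib

open Matrix

private lemma trace_mul_conjT {ι κ : Type*} [Fintype ι] [Fintype κ] (A : Matrix ι κ ℂ) :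
    Matrix.trace (A * Aᴴ) = ((∑ i, ∑ j, Complex.normSq (A i j) : ℝ) : ℂ) := by
  push_cast
  simp [Matrix.trace, Matrix.mul_apply, Matrix.conjTranspose_apply, Matrix.diag,
    Complex.mul_conj]

theorem welch_equality_iff_etf (m n d : ℕ) (hn : 2 ≤ n) (hd : 1 ≤ d) (hdn : d ≤ n)
    (Φ : Matrix (Fin m) (Fin n) ℂ)
    (H : Submodule ℂ (Fin m → ℂ)) (hdim : Module.finrank ℂ H = d)
    (hcol : ∀ j, (fun i => Φ i j) ∈ H)
    (r : ℝ) (hr : 0 < r) (hnorm : ∀ j, (Φᴴ * Φ) j j = (r : ℂ))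
    (P : Matrix (Fin m) (Fin m) ℂ) (hP1 : Pᴴ = P)
    (hP2 : ∀ x ∈ H, P *ᵥ x = x) (hP3 : ∀ x, P *ᵥ x ∈ H) :
    IsGreatest {x : ℝ | ∃ i j : Fin n, i ≠ j ∧ x = ‖(Φᴴ * Φ) i j‖ / r}
        (Real.sqrt (((n : ℝ) - d) / (d * ((n : ℝ) - 1)))) ↔
      (Φ * Φᴴ = ((r * n / d : ℝ) : ℂ) • P ∧
        ∃ w : ℝ, 0 ≤ w ∧ ∀ i j : Fin n, i ≠ j → ‖(Φᴴ * Φ) i j‖ = w) := by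
  classical
  have hd0 : (0:ℝ) < d := by exact_mod_cast hd
  have hn1 : (0:ℝ) < (n:ℝ) - 1 := by
    have : (2:ℝ) ≤ n := by exact_mod_cast hn
    linarith
  have hnd : (d:ℝ) ≤ n := by exact_mod_cast hdn
  have hq0 : 0 ≤ ((n:ℝ) - d) / (d * ((n:ℝ) - 1)) :=
    div_nonneg (by linarith) (by positivity)
  set q : ℝ := ((n : ℝ) - d) / (d * ((n:ℝ) - 1)) with hqdef
  set c : ℝ := r * n / d with hc
  -- matrix facts
  have hPΦ : P * Φ = Φ := by
    ext i j
    have h := congrFun (hP2 _ (hcol j)) i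
    simpa [Matrix.mul_apply, Matrix.mulVec, dotProduct] using h
  have hΦP : Φᴴ * P = Φᴴ := by
    have h := congrArg conjTranspose hPΦ
    simpa [conjTranspose_mul, hP1] using h
  have hPP : P * P = P := by
    ext i j
    have h := congrFun (hP2 _ (hP3 (Pi.single j 1))) i
    simpa [Matrix.mul_apply, Matrix.mulVec, dotProduct, Pi.single_apply, mul_comm] using h
  have htrP : Matrix.trace P = (d : ℂ) := by
    have hproj : LinearMap.IsProj H P.mulVecLin := ⟨fun x => hP3 x, fun x hx => hP2 x hx⟩
    have h1 := hproj.trace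
    rw [LinearMap.trace_eq_matrix_trace ℂ (Pi.basisFun ℂ (Fin m)), LinearMap.toMatrix_eq_toMatrix',
      ← Matrix.toLin'_apply', LinearMap.toMatrix'_toLin', hdim] at h1
    exact h1
  have htrG : Matrix.trace (Φᴴ * Φ) = ((n * r : ℝ) : ℂ) := by
    simp only [Matrix.trace, Matrix.diag, hnorm, Finset.sum_const, Finset.card_univ,
      Fintype.card_fin, nsmul_eq_mul]
    push_cast; ring
  have hGH : (Φᴴ * Φ)ᴴ = Φᴴ * Φ := by simp [conjTranspose_mul]
  set S : ℝ := ∑ i, ∑ j, Complex.normSq ((Φ * Φᴴ - (c:ℂ) • P) i j) with hS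
  set Soff : ℝ := ∑ i : Fin n, ∑ j ∈ Finset.univ.erase i, Complex.normSq ((Φᴴ * Φ) i j) with hSoff
  have hS0 : 0 ≤ S := by
    rw [hS]
    apply Finset.sum_nonneg; intro i _
    apply Finset.sum_nonneg; intro j _
    exact Complex.normSq_nonneg _
  -- trace identities
  have h1 : Matrix.trace ((Φ * Φᴴ - (c:ℂ) • P) * (Φ * Φᴴ - (c:ℂ) • P)ᴴ)
      = Matrix.trace ((Φᴴ * Φ) * (Φᴴ * Φ)) + (((c^2*d - 2*c*(n*r) : ℝ)) : ℂ) := by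
    have hTh : (Φ * Φᴴ)ᴴ = Φ * Φᴴ := by simp [conjTranspose_mul]
    have hTP : (Φ * Φᴴ) * P = Φ * Φᴴ := by rw [Matrix.mul_assoc, hΦP]
    have hPT : P * (Φ * Φᴴ) = Φ * Φᴴ := by rw [← Matrix.mul_assoc, hPΦ]
    have hsmul : ((c:ℂ) • P)ᴴ = (c:ℂ) • P := by
      rw [conjTranspose_smul, hP1, Complex.star_def, Complex.conj_ofReal]
    have htrT : Matrix.trace (Φ * Φᴴ) = ((n * r : ℝ) : ℂ) := by
      rw [Matrix.trace_mul_comm]; exact htrG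
    have htrTT : Matrix.trace ((Φ * Φᴴ) * (Φ * Φᴴ)) = Matrix.trace ((Φᴴ * Φ) * (Φᴴ * Φ)) := by
      rw [Matrix.mul_assoc, Matrix.trace_mul_comm, ← Matrix.mul_assoc, ← Matrix.mul_assoc]
    rw [conjTranspose_sub, hTh, hsmul, Matrix.sub_mul, Matrix.mul_sub, Matrix.mul_sub,
      Matrix.smul_mul, Matrix.smul_mul, Matrix.mul_smul, Matrix.mul_smul, hTP, hPT, hPP,
      smul_smul]
    simp only [Matrix.trace_sub, Matrix.trace_smul, htrT, htrP, htrTT, smul_eq_mul]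
    push_cast
    ring
  have h2 : Matrix.trace ((Φ * Φᴴ - (c:ℂ) • P) * (Φ * Φᴴ - (c:ℂ) • P)ᴴ) = (S : ℂ) :=
    trace_mul_conjT _
  have h3 : Matrix.trace ((Φᴴ * Φ) * (Φᴴ * Φ)) = (((n * r^2 + Soff : ℝ)) : ℂ) := by
    rw [show (Φᴴ * Φ) * (Φᴴ * Φ) = (Φᴴ * Φ) * (Φᴴ * Φ)ᴴ by rw [hGH], trace_mul_conjT]
    norm_cast
    have hrow : ∀ i : Fin n, (∑ j, Complex.normSq ((Φᴴ * Φ) i j))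
        = r^2 + ∑ j ∈ Finset.univ.erase i, Complex.normSq ((Φᴴ * Φ) i j) := by
      intro i
      rw [← Finset.add_sum_erase _ _ (Finset.mem_univ i), hnorm i]
      simp [Complex.normSq_ofReal, sq]
    simp only [hrow, Finset.sum_add_distrib, Finset.sum_const, Finset.card_univ,
      Fintype.card_fin, nsmul_eq_mul, hSoff]
  -- counting lemma
  have hconst : ∀ B : ℝ, (∑ _i : Fin n, ∑ _j ∈ Finset.univ.erase _i, B) = n*((n:ℝ)-1)*B := by
    intro B
    have hcard : ∀ i : Fin n, (Finset.univ.erase i).card = n - 1 := fun i => by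
      rw [Finset.card_erase_of_mem (Finset.mem_univ i), Finset.card_univ, Fintype.card_fin]
    simp only [Finset.sum_const, hcard, nsmul_eq_mul, Finset.card_univ, Fintype.card_fin]
    rw [Nat.cast_sub (by omega : 1 ≤ n), Nat.cast_one]
    ring
  -- key identity
  have hkey : Soff = S + n*((n:ℝ)-1)*(r^2*q) := by
    have hcomb : (S : ℂ) = (((n * r^2 + Soff + (c^2*d - 2*c*(n*r)) : ℝ)) : ℂ) := by
      rw [← h2, h1, h3]; push_cast; ring
    have hre : S = n * r^2 + Soff + (c^2*d - 2*c*(n*r)) := by exact_mod_cast hcomb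
    have harith : (n:ℝ)*((n:ℝ)-1)*(r^2*q) = 2*c*(n*r) - c^2*d - n*r^2 := by
      rw [hc, hqdef]
      field_simp
      ring
    rw [harith]; linarith
  constructor
  · -- forward direction
    intro hgr
    have hub : ∀ i j : Fin n, i ≠ j → ‖(Φᴴ * Φ) i j‖ ≤ r * Real.sqrt q := by
      intro i j hij
      have hmem := hgr.2 ⟨i, j, hij, rfl⟩
      have := (div_le_iff₀ hr).1 hmem
      linarith
    have hnsq : ∀ i j : Fin n, i ≠ j → Complex.normSq ((Φᴴ * Φ) i j) ≤ r^2 * q := by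
      intro i j hij
      rw [← Complex.sq_norm]
      calc ‖(Φᴴ * Φ) i j‖ ^ 2 ≤ (r * Real.sqrt q)^2 :=
            pow_le_pow_left₀ (norm_nonneg _) (hub i j hij) 2
        _ = r^2 * q := by rw [mul_pow, Real.sq_sqrt hq0]
    have hinner_le : ∀ i : Fin n,
        (∑ j ∈ Finset.univ.erase i, Complex.normSq ((Φᴴ * Φ) i j))
          ≤ ∑ _j ∈ Finset.univ.erase i, r^2*q := by
      intro i
      apply Finset.sum_le_sum
      intro j hj
      exact hnsq i j (Finset.ne_of_mem_erase hj).symm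
    have hSigmale : Soff ≤ n*((n:ℝ)-1)*(r^2*q) := by
      rw [hSoff, ← hconst (r^2*q)]
      exact Finset.sum_le_sum (fun i _ => hinner_le i)
    have hSeq : S = 0 := le_antisymm (by linarith) hS0
    have hzero : Φ * Φᴴ - (c:ℂ) • P = 0 := by
      ext i j
      have hz : Complex.normSq ((Φ * Φᴴ - (c:ℂ) • P) i j) = 0 := by
        have h4 : ∑ j', Complex.normSq ((Φ * Φᴴ - (c:ℂ) • P) i j') = 0 := by
          have := (Finset.sum_eq_zero_iff_of_nonneg (fun i' _ =>
            Finset.sum_nonneg (fun j' _ => Complex.normSq_nonneg _))).1 hSeq.symm.symm i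
            (Finset.mem_univ i)
          exact this
        exact (Finset.sum_eq_zero_iff_of_nonneg (fun j' _ => Complex.normSq_nonneg _)).1 h4 j
          (Finset.mem_univ j)
      simpa [Complex.normSq_eq_zero] using hz
    refine ⟨sub_eq_zero.1 hzero, r * Real.sqrt q, by positivity, ?_⟩
    -- equiangularity
    have hSigmaeq : Soff = n*((n:ℝ)-1)*(r^2*q) := by rw [hkey, hSeq]; ring
    have houter : ∀ i ∈ (Finset.univ : Finset (Fin n)),
        (∑ j ∈ Finset.univ.erase i, Complex.normSq ((Φᴴ * Φ) i j))
          = ∑ _j ∈ Finset.univ.erase i, r^2*q := by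
      apply (Finset.sum_eq_sum_iff_of_le (fun i _ => hinner_le i)).1
      rw [← hSoff, hSigmaeq, hconst]
    intro i j hij
    have hinner := (Finset.sum_eq_sum_iff_of_le (fun j' hj' =>
      hnsq i j' (Finset.ne_of_mem_erase hj').symm)).1 (houter i (Finset.mem_univ i)) j
      (Finset.mem_erase.2 ⟨hij.symm, Finset.mem_univ j⟩)
    rw [Complex.norm_def, hinner, Real.sqrt_mul (sq_nonneg r), Real.sqrt_sq hr.le]
  · -- reverse direction
    rintro ⟨htight, w, hw0, hwall⟩
    have hSeq : S = 0 := by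
      have hzero : Φ * Φᴴ - (c:ℂ) • P = 0 := by rw [htight]; exact sub_self _
      rw [hS]
      simp only [hzero]
      simp
    have hSigmaeq : Soff = n*((n:ℝ)-1)*(r^2*q) := by rw [hkey, hSeq]; ring
    have hSigmaw : Soff = n*((n:ℝ)-1)*(w^2) := by
      rw [hSoff, ← hconst (w^2)]
      apply Finset.sum_congr rfl
      intro i _
      apply Finset.sum_congr rfl
      intro j hj
      rw [← Complex.sq_norm, hwall i j (Finset.ne_of_mem_erase hj).symm]
    have hw2 : w^2 = r^2*q := by
      have hne : (n:ℝ)*((n:ℝ)-1) ≠ 0 := by positivity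
      have := hSigmaw.symm.trans hSigmaeq
      rw [mul_assoc, mul_assoc] at this
      exact mul_left_cancel₀ (by positivity : (n:ℝ) ≠ 0)
        (mul_left_cancel₀ (by positivity : (n:ℝ)-1 ≠ 0) (by linarith [this]))
    have hwval : w = r * Real.sqrt q := by
      rw [← Real.sqrt_sq hw0, hw2, Real.sqrt_mul (sq_nonneg r), Real.sqrt_sq hr.le]
    have hdivr : r * Real.sqrt q / r = Real.sqrt q := by
      field_simp
    constructor
    · refine ⟨⟨0, by omega⟩, ⟨1, by omega⟩, ?_, ?_⟩
      · simp [Fin.ext_iff]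
      · rw [hwall _ _ (by simp [Fin.ext_iff]), hwval, hdivr]
    · rintro x ⟨i, j, hij, rfl⟩
      rw [hwall i j hij, hwval, hdivr]
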